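/- (Probabilistic correctness of the union operation.) Let v, w : Fin N → ℝ≥0 be weighted sets, let i ∈ Fin N, and suppose N_W > 2 · |supp(v) ∪ supp(w)|. If the family H = (h_1,…,h_{N_D}) is drawn uniformly at random in the random-hash model, then the probability that CM_H(i, S_H(v) + S_H(w)) ≠ v i + w i is at most 1 / 2^{N_D}, where S_H(v) + S_H(w) is the entrywise sum of the two sketches. -/

import Mathlib

open Finset

/-- The primitive sketch of a weighted set `v` under hash function `h`. -/
def sketch {N NW : ℕ} (h : Fin N → Fin NW) (v : Fin N → NNReal) : Fin NW → NNReal :=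
  fun k => ∑ i ∈ Finset.univ.filter (fun i => h i = k), v i

/-- The support of a weighted set, as a finset. -/
noncomputable def supp {N : ℕ} (v : Fin N → NNReal) : Finset (Fin N) :=
  Finset.univ.filter (fun i => v i ≠ 0)

/-- The count-min sketch of `v` under the family `H`: the `j`-th row is the
primitive sketch of `v` under `H j`. -/
def cmSketch {N NW ND : ℕ} (H : Fin ND → Fin N → Fin NW) (v : Fin N → NNReal) :
    Fin ND → Fin NW → NNReal :=
  fun j => sketch (H j) v

/-- The count-min lookup of `i` in an `ND × NW` matrix `M`, relative to the
family `H`: the minimum over `j` of `M[j, h_j(i)]`. -/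
noncomputable def cmLookup {N NW ND : ℕ} (H : Fin ND → Fin N → Fin NW)
    (M : Fin ND → Fin NW → NNReal) (i : Fin N) : NNReal :=
  ⨅ j, M j (H j i)

/-- Probabilistic correctness of the union operation: if
`NW > 2 * |supp v ∪ supp w|` and the family `H` is drawn uniformly at random,
the probability that `CM_H(i, S_H(v) + S_H(w)) ≠ v i + w i` is at most
`1 / 2 ^ ND`, where `S_H(v) + S_H(w)` is the entrywise sum of sketches. -/
theorem prob_cmLookup_sum_err_le
    {N NW ND : ℕ} (hN : 0 < N) (hNW : 0 < NW) (hND : 0 < ND)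
    (v w : Fin N → NNReal) (i : Fin N)
    (hW : 2 * (supp v ∪ supp w).card < NW) :
    ((Finset.univ.filter (fun H : Fin ND → Fin N → Fin NW =>
        cmLookup H (cmSketch H v + cmSketch H w) i ≠ v i + w i)).card : ℝ)
      / (Fintype.card (Fin ND → Fin N → Fin NW) : ℝ)
      ≤ 1 / 2 ^ ND := by
  haveI : NeZero ND := ⟨hND.ne'⟩
  set U := supp v ∪ supp w with hU
  set S := U.erase i with hSdef
  set Bad : Finset (Fin N → Fin NW) :=
    Finset.univ.filter (fun h => ∃ k ∈ S, h k = h i) with hBadDef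
  -- Step A: the error set is contained in the set of families all-bad rows
  have hsub : (Finset.univ.filter (fun H : Fin ND → Fin N → Fin NW =>
        cmLookup H (cmSketch H v + cmSketch H w) i ≠ v i + w i)) ⊆
      Fintype.piFinset (fun _ : Fin ND => Bad) := by
    intro H hH
    simp only [Finset.mem_filter, Finset.mem_univ, true_and] at hH
    rw [Fintype.mem_piFinset]
    intro j
    simp only [hBadDef, Finset.mem_filter, Finset.mem_univ, true_and]
    by_contra hc
    push_neg at hc
    apply hH
    have hterm : ∀ j' : Fin ND,
        v i + w i ≤ (cmSketch H v + cmSketch H w) j' (H j' i) := by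
      intro j'
      have hi : i ∈ Finset.univ.filter (fun k => H j' k = H j' i) := by simp
      simp only [Pi.add_apply, cmSketch, sketch]
      exact add_le_add (Finset.single_le_sum (fun _ _ => zero_le) hi)
        (Finset.single_le_sum (fun _ _ => zero_le) hi)
    have heq : (cmSketch H v + cmSketch H w) j (H j i) = v i + w i := by
      have hzero : ∀ k ∈ Finset.univ.filter (fun k => H j k = H j i),
          k ≠ i → v k = 0 ∧ w k = 0 := by
        intro k hk hki
        simp only [Finset.mem_filter] at hk
        have hkS : k ∉ S := fun h => hc k h hk.2
        have hkU : k ∉ U := fun h => hkS (Finset.mem_erase.mpr ⟨hki, h⟩)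
        simp only [hU, supp, Finset.mem_union, Finset.mem_filter, Finset.mem_univ,
          true_and, not_or, not_not] at hkU
        exact hkU
      have hi : i ∈ Finset.univ.filter (fun k => H j k = H j i) := by simp
      simp only [Pi.add_apply, cmSketch, sketch]
      rw [Finset.sum_eq_single_of_mem i hi (fun k hk hki => (hzero k hk hki).1),
          Finset.sum_eq_single_of_mem i hi (fun k hk hki => (hzero k hk hki).2)]
    refine le_antisymm ?_ ?_
    · calc cmLookup H (cmSketch H v + cmSketch H w) i
          ≤ (cmSketch H v + cmSketch H w) j (H j i) :=
            ciInf_le (OrderBot.bddBelow _) j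
        _ = v i + w i := heq
    · exact le_ciInf hterm
  -- Step B: count Bad
  have hfil : ∀ k ∈ S, (Finset.univ.filter (fun h : Fin N → Fin NW => h k = h i)).card
      ≤ NW ^ (N - 1) := by
    intro k hk
    have hki : k ≠ i := Finset.ne_of_mem_erase hk
    have hinj := Finset.card_le_card_of_injOn
      (s := Finset.univ.filter (fun h : Fin N → Fin NW => h k = h i))
      (f := fun (h : Fin N → Fin NW) => (fun x : {x : Fin N // x ≠ k} => h x))
      (t := (Finset.univ : Finset ({x : Fin N // x ≠ k} → Fin NW)))
      (fun h _ => Finset.mem_univ _) ?_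
    · refine hinj.trans_eq ?_
      have hcard : Fintype.card {x : Fin N // x ≠ k} = N - 1 := by
        simp [Fintype.card_subtype_compl]
      rw [Finset.card_univ, Fintype.card_fun, Fintype.card_fin, hcard]
    · intro h1 h1m h2 h2m hagree
      simp only [Finset.coe_filter, Set.mem_setOf_eq] at h1m h2m
      funext x
      by_cases hx : x = k
      · subst hx
        have hi1 : h1 i = h2 i := congrFun hagree ⟨i, (Ne.symm hki)⟩
        rw [h1m.2, h2m.2, hi1]
      · exact congrFun hagree ⟨x, hx⟩
  have hBadCard : Bad.card ≤ S.card * NW ^ (N - 1) := by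
    have hBsub : Bad ⊆ S.biUnion (fun k =>
        Finset.univ.filter (fun h : Fin N → Fin NW => h k = h i)) := by
      intro h hh
      simp only [hBadDef, Finset.mem_filter, Finset.mem_univ, true_and] at hh
      obtain ⟨k, hkS, hkc⟩ := hh
      exact Finset.mem_biUnion.mpr ⟨k, hkS, by simp [hkc]⟩
    calc Bad.card ≤ _ := Finset.card_le_card hBsub
      _ ≤ ∑ k ∈ S, (Finset.univ.filter (fun h : Fin N → Fin NW => h k = h i)).card :=
          Finset.card_biUnion_le
      _ ≤ S.card * NW ^ (N - 1) := by
          rw [← smul_eq_mul]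
          exact Finset.sum_le_card_nsmul _ _ _ hfil
  have hS2 : 2 * S.card ≤ NW := by
    have hle : S.card ≤ U.card := hSdef ▸ Finset.card_erase_le
    omega
  have hBad2 : 2 * Bad.card ≤ NW ^ N := by
    calc 2 * Bad.card ≤ 2 * (S.card * NW ^ (N - 1)) := by omega
      _ = (2 * S.card) * NW ^ (N - 1) := by ring
      _ ≤ NW * NW ^ (N - 1) := Nat.mul_le_mul_right _ hS2
      _ = NW ^ N := by
          rw [← pow_succ', Nat.sub_add_cancel hN]
  -- Step C: final arithmetic
  have hE : (Finset.univ.filter (fun H : Fin ND → Fin N → Fin NW =>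
        cmLookup H (cmSketch H v + cmSketch H w) i ≠ v i + w i)).card ≤ Bad.card ^ ND := by
    refine (Finset.card_le_card hsub).trans_eq ?_
    rw [Fintype.card_piFinset_const]
  have hT : Fintype.card (Fin ND → Fin N → Fin NW) = (NW ^ N) ^ ND := by
    simp [Fintype.card_fun]
  have hkey : (Finset.univ.filter (fun H : Fin ND → Fin N → Fin NW =>
        cmLookup H (cmSketch H v + cmSketch H w) i ≠ v i + w i)).card * 2 ^ ND
      ≤ (NW ^ N) ^ ND := by
    calc _ ≤ Bad.card ^ ND * 2 ^ ND := Nat.mul_le_mul_right _ hE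
      _ = (2 * Bad.card) ^ ND := by rw [← mul_pow]; ring_nf
      _ ≤ (NW ^ N) ^ ND := Nat.pow_le_pow_left hBad2 _
  rw [hT, div_le_div_iff₀ (by positivity) (by positivity), one_mul]
  exact_mod_cast hkey
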